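/- arXiv:2203.11830 — 2 statements merged into one kernel-verified Lean document; each statement's English description precedes it below -/
import Mathlib

section
/- For every complex number p with Re(p) > -γ, the function c ↦ e^{pc}·μγA e^{γc}·e^{-μA e^{γc}} is Lebesgue integrable on ℝ; moreover, the function f defined by f(p) = (1/p)·∫_ℝ e^{pc}·μγA e^{γc}·e^{-μA e^{γc}} dc is holomorphic (complex differentiable) at every point of the set {p ∈ ℂ : Re(p) > -γ and p ≠ 0}. -/
open MeasureTheory

/-- Key computation: for `Re p > -γ`, the integrand is integrable and the integral equals
`exp(-(p/γ) log(μA)) * Γ(p/γ + 1)`. -/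
theorem stmt0_key (A μ γ : ℝ) (hA : 0 < A) (hμ : 0 < μ) (hγ : 0 < γ) (p : ℂ)
    (hp : -γ < p.re) :
    Integrable (fun c : ℝ =>
        Complex.exp (p * (c : ℂ)) * ((μ * γ * A * Real.exp (γ * c) : ℝ) : ℂ) *
          ((Real.exp (-(μ * A * Real.exp (γ * c))) : ℝ) : ℂ)) ∧
    (∫ c : ℝ, Complex.exp (p * (c : ℂ)) * ((μ * γ * A * Real.exp (γ * c) : ℝ) : ℂ) *
          ((Real.exp (-(μ * A * Real.exp (γ * c))) : ℝ) : ℂ)) =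
      Complex.exp (-(p / (γ : ℂ)) * ((Real.log (μ * A) : ℝ) : ℂ)) *
        Complex.Gamma (p / (γ : ℂ) + 1) := by
  have hμA : (0 : ℝ) < μ * A := by positivity
  have hγℂ : ((γ : ℂ)) ≠ 0 := Complex.ofReal_ne_zero.mpr hγ.ne'
  set s : ℂ := p / (γ : ℂ) + 1 with hs_def
  have hs : 0 < s.re := by
    have : s.re = p.re / γ + 1 := by
      simp [hs_def, Complex.add_re, Complex.div_ofReal_re]
    rw [this]
    have : -1 < p.re / γ := by
      rw [lt_div_iff₀ hγ]; linarith
    linarith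
  set C : ℂ := Complex.exp (-(p / (γ : ℂ)) * ((Real.log (μ * A) : ℝ) : ℂ)) with hC_def
  set φ : ℝ → ℝ := fun c => μ * A * Real.exp (γ * c) with hφ_def
  set φ' : ℝ → ℝ := fun c => μ * A * (Real.exp (γ * c) * γ) with hφ'_def
  have hderiv : ∀ x ∈ (Set.univ : Set ℝ), HasDerivWithinAt φ (φ' x) Set.univ x := by
    intro x _
    have h1 : HasDerivAt (fun x : ℝ => γ * x) (γ * 1) x := (hasDerivAt_id x).const_mul γ
    have h2 : HasDerivAt (fun x : ℝ => Real.exp (γ * x)) (Real.exp (γ * x) * (γ * 1)) x :=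
      h1.exp
    have h3 := h2.const_mul (μ * A)
    have h4 : HasDerivAt φ (φ' x) x := by simpa [hφ_def, hφ'_def] using h3
    exact h4.hasDerivWithinAt
  have hinj : Set.InjOn φ Set.univ := by
    intro a _ b _ hab
    have h1 : Real.exp (γ * a) = Real.exp (γ * b) :=
      mul_left_cancel₀ hμA.ne' hab
    have h2 : γ * a = γ * b := Real.exp_injective h1
    exact mul_left_cancel₀ hγ.ne' h2
  have himg : φ '' Set.univ = Set.Ioi (0 : ℝ) := by
    rw [Set.image_univ]
    ext u
    constructor
    · rintro ⟨x, rfl⟩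
      have : (0 : ℝ) < μ * A * Real.exp (γ * x) := by positivity
      exact this
    · intro hu
      refine ⟨Real.log (u / (μ * A)) / γ, ?_⟩
      have hu' : (0 : ℝ) < u / (μ * A) := div_pos hu hμA
      simp only [hφ_def]
      rw [mul_div_cancel₀ _ hγ.ne', Real.exp_log hu']
      field_simp
  set g : ℝ → ℂ := fun u =>
    Complex.exp (p / (γ : ℂ) * ((Real.log (u / (μ * A)) : ℝ) : ℂ)) *
      ((Real.exp (-u) : ℝ) : ℂ) with hg_def
  -- pointwise identity on `Ioi 0` relating `g` and the Gamma integrand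
  have hgam_eq : Set.EqOn (fun u : ℝ => C * (((Real.exp (-u) : ℝ) : ℂ) * (u : ℂ) ^ (s - 1)))
      g (Set.Ioi 0) := by
    intro u hu
    have hu0 : (0 : ℝ) < u := hu
    have huℂ : (u : ℂ) ≠ 0 := Complex.ofReal_ne_zero.mpr hu0.ne'
    have h1 : (u : ℂ) ^ (s - 1) = Complex.exp (Complex.log (u : ℂ) * (p / (γ : ℂ))) := by
      rw [Complex.cpow_def_of_ne_zero huℂ]
      congr 1
      rw [hs_def]; ring_nf
    have h2 : Complex.log (u : ℂ) = ((Real.log u : ℝ) : ℂ) := (Complex.ofReal_log hu0.le).symm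
    have h3 : Real.log (u / (μ * A)) = Real.log u - Real.log (μ * A) :=
      Real.log_div hu0.ne' hμA.ne'
    simp only [hg_def, h1, h2, h3, hC_def]
    rw [mul_comm ((Real.exp (-u) : ℝ) : ℂ) (Complex.exp _), ← mul_assoc, ← Complex.exp_add]
    congr 1
    push_cast
    ring
  have hgi : IntegrableOn g (Set.Ioi (0 : ℝ)) := by
    have hGam : IntegrableOn
        (fun u : ℝ => C * (((Real.exp (-u) : ℝ) : ℂ) * (u : ℂ) ^ (s - 1))) (Set.Ioi 0) :=
      (Complex.GammaIntegral_convergent hs).const_mul C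
    exact hGam.congr_fun hgam_eq measurableSet_Ioi
  -- pointwise identity: `|φ' c| • g (φ c)` is the integrand
  have hsmul : ∀ c : ℝ, |φ' c| • g (φ c) =
      Complex.exp (p * (c : ℂ)) * ((μ * γ * A * Real.exp (γ * c) : ℝ) : ℂ) *
        ((Real.exp (-(μ * A * Real.exp (γ * c))) : ℝ) : ℂ) := by
    intro c
    have habs : |φ' c| = φ' c := abs_of_pos (by simp only [hφ'_def]; positivity)
    have hlog : Real.log (φ c / (μ * A)) = γ * c := by
      simp only [hφ_def]
      rw [mul_div_cancel_left₀ _ hμA.ne', Real.log_exp]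
    have harg : p / (γ : ℂ) * ((γ * c : ℝ) : ℂ) = p * (c : ℂ) := by
      push_cast
      field_simp
    rw [habs, Complex.real_smul]
    simp only [hg_def, hlog]
    simp only [hg_def, hφ_def, hφ'_def, hlog, harg]
    push_cast
    ring
  have hiff := integrableOn_image_iff_integrableOn_abs_deriv_smul
    MeasurableSet.univ hderiv hinj g
  rw [himg] at hiff
  have hint : Integrable (fun c : ℝ =>
      Complex.exp (p * (c : ℂ)) * ((μ * γ * A * Real.exp (γ * c) : ℝ) : ℂ) *
        ((Real.exp (-(μ * A * Real.exp (γ * c))) : ℝ) : ℂ)) := by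
    rw [← integrableOn_univ]
    have := hiff.mp hgi
    exact this.congr_fun (fun x _ => hsmul x) MeasurableSet.univ
  refine ⟨hint, ?_⟩
  have hval := integral_image_eq_integral_abs_deriv_smul MeasurableSet.univ hderiv hinj g
  rw [himg, setIntegral_univ] at hval
  have h5 : (∫ x : ℝ, |φ' x| • g (φ x)) =
      ∫ c : ℝ, Complex.exp (p * (c : ℂ)) * ((μ * γ * A * Real.exp (γ * c) : ℝ) : ℂ) *
        ((Real.exp (-(μ * A * Real.exp (γ * c))) : ℝ) : ℂ) :=
    integral_congr_ae (Filter.Eventually.of_forall hsmul)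
  have h6 : (∫ u in Set.Ioi (0 : ℝ), g u) = C * Complex.Gamma s := by
    rw [← setIntegral_congr_fun measurableSet_Ioi hgam_eq, integral_const_mul,
      Complex.Gamma_eq_integral hs]
    rfl
  rw [← h5, ← hval, h6]

/-- Fix real constants `A > 0`, `μ > 0`, `γ > 0`.  For every complex `p` with
`Re p > -γ`, the function `c ↦ e^{pc} · μγA e^{γc} · e^{-μA e^{γc}}` is Lebesgue integrable on
`ℝ`, and moreover `f(p) = (1/p) ∫_ℝ e^{pc} · μγA e^{γc} · e^{-μA e^{γc}} dc` is complex
differentiable at every point of `{p : Re p > -γ, p ≠ 0}`. -/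
theorem stmt_0 (A μ γ : ℝ) (hA : 0 < A) (hμ : 0 < μ) (hγ : 0 < γ) :
    (∀ p : ℂ, -γ < p.re →
      Integrable (fun c : ℝ =>
        Complex.exp (p * (c : ℂ)) * ((μ * γ * A * Real.exp (γ * c) : ℝ) : ℂ) *
          ((Real.exp (-(μ * A * Real.exp (γ * c))) : ℝ) : ℂ))) ∧
    (∀ p : ℂ, -γ < p.re → p ≠ 0 →
      DifferentiableAt ℂ
        (fun p : ℂ => (1 / p) *
          ∫ c : ℝ, Complex.exp (p * (c : ℂ)) * ((μ * γ * A * Real.exp (γ * c) : ℝ) : ℂ) *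
            ((Real.exp (-(μ * A * Real.exp (γ * c))) : ℝ) : ℂ)) p) := by
  constructor
  · intro p hp
    exact (stmt0_key A μ γ hA hμ hγ p hp).1
  · intro p hp hp0
    have hγℂ : ((γ : ℂ)) ≠ 0 := Complex.ofReal_ne_zero.mpr hγ.ne'
    set N : ℂ → ℂ := fun q => (1 / q) *
      (Complex.exp (-(q / (γ : ℂ)) * ((Real.log (μ * A) : ℝ) : ℂ)) *
        Complex.Gamma (q / (γ : ℂ) + 1)) with hN_def
    have hNdiff : DifferentiableAt ℂ N p := by
      have h1 : DifferentiableAt ℂ (fun q : ℂ => 1 / q) p :=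
        (differentiableAt_const 1).div differentiableAt_id hp0
      have h2 : DifferentiableAt ℂ
          (fun q : ℂ => Complex.exp (-(q / (γ : ℂ)) * ((Real.log (μ * A) : ℝ) : ℂ))) p :=
        (((differentiableAt_id.div_const _).neg.mul_const _)).cexp
      have haff : DifferentiableAt ℂ (fun q : ℂ => q / (γ : ℂ) + 1) p :=
        (differentiableAt_id.div_const _).add_const 1
      have hre : 0 < (p / (γ : ℂ) + 1).re := by
        have : (p / (γ : ℂ) + 1).re = p.re / γ + 1 := by
          simp [Complex.add_re, Complex.div_ofReal_re]
        rw [this]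
        have : -1 < p.re / γ := by rw [lt_div_iff₀ hγ]; linarith
        linarith
      have hne : ∀ m : ℕ, p / (γ : ℂ) + 1 ≠ -(m : ℂ) := by
        intro m h
        have := congrArg Complex.re h
        simp only [Complex.neg_re, Complex.natCast_re] at this
        rw [this] at hre
        have : (0 : ℝ) ≤ (m : ℝ) := Nat.cast_nonneg m
        linarith
      have h3 : DifferentiableAt ℂ (fun q : ℂ => Complex.Gamma (q / (γ : ℂ) + 1)) p :=
        (Complex.differentiableAt_Gamma _ hne).comp p haff
      exact h1.mul (h2.mul h3)
    refine hNdiff.congr_of_eventuallyEq ?_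
    have hopen : IsOpen {q : ℂ | -γ < q.re} :=
      isOpen_lt continuous_const Complex.continuous_re
    filter_upwards [hopen.mem_nhds hp] with q hq
    have := (stmt0_key A μ γ hA hμ hγ q hq).2
    simp only [hN_def]
    rw [this]
end

section
/- For every real number p with -γ < p < 0, the function c ↦ e^{pc}·(e^{-μA e^{γc}} − 1) is Lebesgue integrable on ℝ, the function c ↦ e^{pc}·μγA e^{γc}·e^{-μA e^{γc}} is Lebesgue integrable on ℝ, and p·∫_ℝ e^{pc}(e^{-μA e^{γc}} − 1) dc = ∫_ℝ e^{pc}·μγA e^{γc}·e^{-μA e^{γc}} dc. -/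
open MeasureTheory

private lemma aux_integrableOn_exp_mul_Iic {b : ℝ} (hb : 0 < b) :
    IntegrableOn (fun c : ℝ => Real.exp (b * c)) (Set.Iic (0:ℝ)) := by
  rw [← MeasureTheory.integrable_indicator_iff measurableSet_Iic]
  have h : Set.indicator (Set.Iic (0:ℝ)) (fun c => Real.exp (b*c))
      = fun x => Set.indicator (Set.Iic (0:ℝ)) Real.exp (b*x) := by
    ext x
    have hx : b * x ≤ 0 ↔ x ≤ 0 := by
      constructor <;> intro h <;> nlinarith
    by_cases hx0 : x ≤ 0 <;> simp [Set.indicator_apply, Set.mem_Iic, hx, hx0]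
  rw [h]
  exact ((integrable_indicator_iff measurableSet_Iic).2 (integrableOn_exp_Iic 0)).comp_mul_left' hb.ne'

/-- Fix real constants `A > 0`, `μ > 0`, `γ > 0`.  For every real `p` with
`-γ < p < 0`, the functions `c ↦ e^{pc}(e^{-μA e^{γc}} - 1)` and
`c ↦ e^{pc} · μγA e^{γc} · e^{-μA e^{γc}}` are Lebesgue integrable on `ℝ`, and
`p · ∫_ℝ e^{pc}(e^{-μA e^{γc}} - 1) dc = ∫_ℝ e^{pc} · μγA e^{γc} · e^{-μA e^{γc}} dc`. -/
theorem stmt_2 (A μ γ : ℝ) (hA : 0 < A) (hμ : 0 < μ) (hγ : 0 < γ) :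
    ∀ p : ℝ, -γ < p → p < 0 →
      Integrable (fun c : ℝ =>
        Real.exp (p * c) * (Real.exp (-(μ * A * Real.exp (γ * c))) - 1)) ∧
      Integrable (fun c : ℝ =>
        Real.exp (p * c) * (μ * γ * A * Real.exp (γ * c)) *
          Real.exp (-(μ * A * Real.exp (γ * c)))) ∧
      p * ∫ c : ℝ, Real.exp (p * c) * (Real.exp (-(μ * A * Real.exp (γ * c))) - 1) =
        ∫ c : ℝ, Real.exp (p * c) * (μ * γ * A * Real.exp (γ * c)) *
          Real.exp (-(μ * A * Real.exp (γ * c))) := by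
  intro p hp1 hp2
  have hμA : 0 < μ * A := mul_pos hμ hA
  have hpγ : 0 < p + γ := by linarith
  set f : ℝ → ℝ := fun c => Real.exp (p * c) * (Real.exp (-(μ * A * Real.exp (γ * c))) - 1)
    with hf_def
  set g : ℝ → ℝ := fun c => Real.exp (p * c) * (μ * γ * A * Real.exp (γ * c)) *
      Real.exp (-(μ * A * Real.exp (γ * c))) with hg_def
  -- basic facts about E c := exp(-(μ A e^{γc}))
  have hEpos : ∀ c : ℝ, 0 < Real.exp (-(μ * A * Real.exp (γ * c))) := fun c => Real.exp_pos _
  have hE1 : ∀ c : ℝ, Real.exp (-(μ * A * Real.exp (γ * c))) ≤ 1 := by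
    intro c
    rw [Real.exp_le_one_iff]
    have := Real.exp_pos (γ * c)
    nlinarith
  -- bound : 1 - exp(-x) ≤ x for x ≥ 0
  have hone_sub : ∀ c : ℝ, 1 - Real.exp (-(μ * A * Real.exp (γ * c))) ≤
      μ * A * Real.exp (γ * c) := by
    intro c
    have := Real.add_one_le_exp (-(μ * A * Real.exp (γ * c)))
    linarith
  -- norm bounds for f
  have hfb1 : ∀ c : ℝ, ‖f c‖ ≤ μ * A * Real.exp ((p + γ) * c) := by
    intro c
    have h1 : ‖f c‖ = Real.exp (p * c) * (1 - Real.exp (-(μ * A * Real.exp (γ * c)))) := by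
      rw [hf_def]
      simp only [Real.norm_eq_abs, abs_mul, Real.abs_exp]
      rw [abs_of_nonpos (by linarith [hE1 c])]
      ring
    rw [h1, show (p + γ) * c = p * c + γ * c by ring, Real.exp_add]
    have := Real.exp_pos (p * c)
    nlinarith [hone_sub c]
  have hfb2 : ∀ c : ℝ, ‖f c‖ ≤ Real.exp (p * c) := by
    intro c
    have h1 : ‖f c‖ = Real.exp (p * c) * (1 - Real.exp (-(μ * A * Real.exp (γ * c)))) := by
      rw [hf_def]
      simp only [Real.norm_eq_abs, abs_mul, Real.abs_exp]
      rw [abs_of_nonpos (by linarith [hE1 c])]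
      ring
    rw [h1]
    have := Real.exp_pos (p * c)
    nlinarith [hEpos c, hE1 c]
  -- norm bounds for g
  have hgpos : ∀ c : ℝ, 0 ≤ g c := by
    intro c
    rw [hg_def]
    positivity
  have hgb1 : ∀ c : ℝ, ‖g c‖ ≤ μ * γ * A * Real.exp ((p + γ) * c) := by
    intro c
    rw [Real.norm_eq_abs, abs_of_nonneg (hgpos c), hg_def,
      show (p + γ) * c = p * c + γ * c by ring, Real.exp_add]
    have h5 : (0:ℝ) ≤ Real.exp (p * c) * (μ * γ * A * Real.exp (γ * c)) := by positivity
    have h6 := mul_le_mul_of_nonneg_left (hE1 c) h5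
    show Real.exp (p * c) * (μ * γ * A * Real.exp (γ * c)) *
        Real.exp (-(μ * A * Real.exp (γ * c))) ≤ _
    nlinarith [h6]
  have hgb2 : ∀ c : ℝ, ‖g c‖ ≤ γ * Real.exp (p * c) := by
    intro c
    rw [Real.norm_eq_abs, abs_of_nonneg (hgpos c), hg_def]
    -- key : e^{γc} * exp(-(μA e^{γc})) ≤ 1/(μA)
    have hkey : Real.exp (γ * c) * Real.exp (-(μ * A * Real.exp (γ * c))) ≤ 1 / (μ * A) := by
      have h2 := Real.exp_pos (γ * c)
      have h3 := Real.add_one_le_exp (μ * A * Real.exp (γ * c))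
      have h4 : Real.exp (-(μ * A * Real.exp (γ * c))) =
          1 / Real.exp (μ * A * Real.exp (γ * c)) := by
        rw [Real.exp_neg]; ring
      rw [h4, mul_one_div, div_le_div_iff₀ (Real.exp_pos _) hμA]
      nlinarith [Real.exp_pos (μ * A * Real.exp (γ * c))]
    have h1 := Real.exp_pos (p * c)
    calc Real.exp (p * c) * (μ * γ * A * Real.exp (γ * c)) *
          Real.exp (-(μ * A * Real.exp (γ * c)))
        = (μ * γ * A) * Real.exp (p * c) *
          (Real.exp (γ * c) * Real.exp (-(μ * A * Real.exp (γ * c)))) := by ring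
      _ ≤ (μ * γ * A) * Real.exp (p * c) * (1 / (μ * A)) := by
          apply mul_le_mul_of_nonneg_left hkey
          positivity
      _ = γ * Real.exp (p * c) := by field_simp
  -- continuity / measurability
  have hfc : Continuous f := by rw [hf_def]; fun_prop
  have hgc : Continuous g := by rw [hg_def]; fun_prop
  -- integrable comparison functions
  have hint1 : IntegrableOn (fun c : ℝ => Real.exp ((p + γ) * c)) (Set.Iic (0:ℝ)) :=
    aux_integrableOn_exp_mul_Iic hpγ
  have hint2 : IntegrableOn (fun c : ℝ => Real.exp (p * c)) (Set.Ioi (0:ℝ)) := by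
    have := exp_neg_integrableOn_Ioi 0 (neg_pos.2 hp2)
    refine this.congr_fun (fun c _ => ?_) measurableSet_Ioi
    ring_nf
  -- integrability of f
  have hf : Integrable f := by
    rw [← integrableOn_univ, ← Set.Iic_union_Ioi (a := (0:ℝ)),
      integrableOn_union]
    constructor
    · refine (hint1.const_mul (μ * A)).mono' (hfc.aestronglyMeasurable.restrict) ?_
      exact Filter.Eventually.of_forall fun c => hfb1 c
    · refine hint2.mono' (hfc.aestronglyMeasurable.restrict) ?_
      exact Filter.Eventually.of_forall fun c => hfb2 c
  -- integrability of g
  have hg : Integrable g := by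
    rw [← integrableOn_univ, ← Set.Iic_union_Ioi (a := (0:ℝ)),
      integrableOn_union]
    constructor
    · refine (hint1.const_mul (μ * γ * A)).mono' (hgc.aestronglyMeasurable.restrict) ?_
      exact Filter.Eventually.of_forall fun c => hgb1 c
    · refine (hint2.const_mul γ).mono' (hgc.aestronglyMeasurable.restrict) ?_
      exact Filter.Eventually.of_forall fun c => hgb2 c
  refine ⟨hf, hg, ?_⟩
  -- derivative
  have hderiv : ∀ c : ℝ, HasDerivAt f (p * f c - g c) c := by
    intro c
    have h1 : HasDerivAt (fun c : ℝ => p * c) p c := by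
      simpa using (hasDerivAt_id c).const_mul p
    have h2 := h1.exp
    have h3 : HasDerivAt (fun c : ℝ => γ * c) γ c := by
      simpa using (hasDerivAt_id c).const_mul γ
    have h4 := h3.exp
    have h5 : HasDerivAt (fun c : ℝ => -(μ * A * Real.exp (γ * c)))
        (-(μ * A * (Real.exp (γ * c) * γ))) c := (h4.const_mul (μ * A)).neg
    have h6 := h5.exp
    have h7 := h6.sub_const 1
    have h8 := h2.mul h7
    refine h8.congr_deriv ?_
    rw [hf_def, hg_def]
    ring
  -- limits at ±∞
  have htop : Filter.Tendsto f Filter.atTop (nhds 0) := by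
    apply squeeze_zero_norm hfb2
    have h1 : Filter.Tendsto (fun c : ℝ => p * c) Filter.atTop Filter.atBot :=
      Filter.tendsto_id.const_mul_atTop_of_neg hp2
    exact Real.tendsto_exp_atBot.comp h1
  have hbot : Filter.Tendsto f Filter.atBot (nhds 0) := by
    apply squeeze_zero_norm hfb1
    have h1 : Filter.Tendsto (fun c : ℝ => (p + γ) * c) Filter.atBot Filter.atBot := by
      have := (Filter.tendsto_id (α := ℝ)).const_mul_atBot hpγ
      simpa using this
    have h2 : Filter.Tendsto (fun c : ℝ => Real.exp ((p + γ) * c)) Filter.atBot (nhds 0) :=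
      Real.tendsto_exp_atBot.comp h1
    simpa using h2.const_mul (μ * A)
  -- FTC on ℝ
  have hint : Integrable (fun c => p * f c - g c) := (hf.const_mul p).sub hg
  have key : ∫ c : ℝ, (p * f c - g c) = 0 - 0 :=
    integral_of_hasDerivAt_of_tendsto hderiv hint hbot htop
  rw [integral_sub (hf.const_mul p) hg, integral_const_mul] at key
  have : p * ∫ c : ℝ, f c = ∫ c : ℝ, g c := by linarith [key]
  exact this
end
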